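/- Every binary tree with n internal nodes can be transformed into the right spine (the unique binary tree with n internal nodes in which every left subtree is empty) by a sequence of at most n − 1 right rotations applied at subtrees. -/

import Mathlib

/-- Binary trees: a tree is either the empty leaf or a node with a left and a
right subtree. -/
inductive BinTree : Type
  | leaf : BinTree
  | node : BinTree → BinTree → BinTree

/-- The number of internal nodes of a binary tree. -/
def BinTree.size : BinTree → ℕ
  | .leaf => 0
  | .node l r => l.size + r.size + 1

/-- `RotR s t`: `t` is obtained from `s` by a single right rotation applied at
some subtree, i.e. by replacing a subtree of the form `node (node A B) C` by
`node A (node B C)`. -/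
inductive RotR : BinTree → BinTree → Prop
  | root (A B C : BinTree) :
      RotR (.node (.node A B) C) (.node A (.node B C))
  | left {l l' : BinTree} (r : BinTree) :
      RotR l l' → RotR (.node l r) (.node l' r)
  | right (l : BinTree) {r r' : BinTree} :
      RotR r r' → RotR (.node l r) (.node l r')

/-- The right spine with `n` internal nodes: every left subtree is empty. -/
def rightSpine : ℕ → BinTree
  | 0 => .leaf
  | n + 1 => .node .leaf (rightSpine n)

def lsize : BinTree → ℕ
  | .leaf => 0
  | .node l _ => l.size

def rs : BinTree → ℕ
  | .leaf => 0
  | .node _ r => rs r + 1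

lemma lsize_le (t : BinTree) : lsize t ≤ t.size := by
  cases t with
  | leaf => simp [lsize, BinTree.size]
  | node l r => simp [lsize, BinTree.size]; omega

lemma rs_le_size (t : BinTree) : rs t ≤ t.size := by
  induction t with
  | leaf => simp [rs, BinTree.size]
  | node l r ihl ihr => simp [rs, BinTree.size]; omega

lemma aux (n : ℕ) : ∀ t : BinTree, t.size * t.size + lsize t = n →
    ∃ (k : ℕ) (f : ℕ → BinTree),
      k ≤ t.size - rs t ∧ f 0 = t ∧ f k = rightSpine t.size ∧
      ∀ i < k, RotR (f i) (f (i + 1)) := by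
  induction n using Nat.strong_induction_on with
  | _ n ih =>
  intro t ht
  match t with
  | .leaf =>
      exact ⟨0, fun _ => .leaf, by simp [rs], by simp, by simp [BinTree.size, rightSpine],
        by omega⟩
  | .node .leaf r =>
      have hm : r.size * r.size + lsize r < n := by
        have h1 := lsize_le r
        simp only [BinTree.size, lsize] at ht
        nlinarith
      obtain ⟨k, f, hk, h0, hke, hstep⟩ := ih _ hm r rfl
      refine ⟨k, fun i => .node .leaf (f i), ?_, by simp [h0], ?_, ?_⟩
      · simp only [BinTree.size, rs]
        omega
      · simp [BinTree.size, rightSpine, hke]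
      · intro i hi
        exact RotR.right _ (hstep i hi)
  | .node (.node a b) r =>
      set t' : BinTree := .node a (.node b r) with ht'
      have hsize : t'.size = (BinTree.node (.node a b) r).size := by
        simp [BinTree.size, ht']; omega
      have hm : t'.size * t'.size + lsize t' < n := by
        rw [hsize]
        simp only [lsize, BinTree.size, ht'] at ht ⊢
        omega
      obtain ⟨k, f, hk, h0, hke, hstep⟩ := ih _ hm t' rfl
      refine ⟨k + 1, fun i => if i = 0 then .node (.node a b) r else f (i - 1),
        ?_, by simp, ?_, ?_⟩
      · have h1 := rs_le_size r
        simp only [rs, BinTree.size, ht'] at hk ⊢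
        omega
      · simp only [Nat.add_sub_cancel, if_neg (Nat.succ_ne_zero k)]
        rw [hke, hsize]
      · intro i hi
        match i with
        | 0 =>
            simp only [if_pos rfl, if_neg (Nat.one_ne_zero), Nat.sub_self, h0]
            exact RotR.root a b r
        | j + 1 =>
            simp only [if_neg (Nat.succ_ne_zero j), if_neg (Nat.succ_ne_zero (j+1)),
              Nat.add_sub_cancel]
            exact hstep j (by omega)

/-- Every binary tree with `n` internal nodes can be transformed into the right
spine by a sequence of at most `n − 1` right rotations applied at subtrees. -/
theorem rotate_to_rightSpine (t : BinTree) :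
    ∃ (k : ℕ) (f : ℕ → BinTree),
      k ≤ t.size - 1 ∧ f 0 = t ∧ f k = rightSpine t.size ∧
      ∀ i < k, RotR (f i) (f (i + 1)) := by
  obtain ⟨k, f, hk, h0, hke, hstep⟩ := aux _ t rfl
  refine ⟨k, f, ?_, h0, hke, hstep⟩
  cases t with
  | leaf => simpa [rs, BinTree.size] using hk
  | node l r =>
      have : 1 ≤ rs (BinTree.node l r) := by simp [rs]
      omega
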